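/- With the notation of the previous theorem, set P = p₁^{s₁−1}···p_m^{s_m−1}. Then for every natural number r > P there exists an integer q with gcd(q,r) = 1 and a < q/r < b. -/

import Mathlib

/-- With `P = ∏ pᵢ^{sᵢ-1}`, the product being over the primes
`pᵢ ≤ max(3/(b-a), 2)` and `sᵢ` minimal with `pᵢ^{sᵢ} > 4/(b-a)`, every
natural number `r > P` is the denominator of an irreducible fraction
`q/r ∈ (a,b)`. -/
theorem irreducible_fraction_denominator_gt_P (a b : ℝ) (hab : a < b)
    (s : ℕ → ℕ) (hs : ∀ p : ℕ, s p = sInf {n : ℕ | 4 / (b - a) < (p : ℝ) ^ n})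
    (P : ℕ)
    (hP : P = ∏ p ∈ (Finset.range (⌊max (3 / (b - a)) 2⌋₊ + 1)).filter Nat.Prime,
        p ^ (s p - 1))
    (r : ℕ) (hr : P < r) :
    ∃ q : ℤ, Int.gcd q (r : ℤ) = 1 ∧ a < (q : ℝ) / (r : ℝ) ∧ (q : ℝ) / (r : ℝ) < b := by
  have hε : (0:ℝ) < b - a := sub_pos.mpr hab
  have hP0 : 0 < P := by
    rw [hP]
    apply Finset.prod_pos
    intro p hp
    exact pow_pos (Nat.Prime.pos (Finset.mem_filter.mp hp).2) _
  have hr0 : r ≠ 0 := by omega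
  have hrpos : (0:ℝ) < (r:ℝ) := by exact_mod_cast Nat.pos_of_ne_zero hr0
  -- Key claim: there is a prime p ∣ r whose full prime power part in r is > 2/(b-a).
  have key : ∃ p : ℕ, p.Prime ∧ p ∣ r ∧ 2 < (b - a) * (p:ℝ) ^ (r.factorization p) := by
    by_contra hcon
    push_neg at hcon
    set S := (Finset.range (⌊max (3 / (b - a)) 2⌋₊ + 1)).filter Nat.Prime with hS
    -- each prime factor has exponent < s p
    have hexp : ∀ p ∈ r.primeFactors, r.factorization p < s p := by
      intro p hp
      obtain ⟨hpp, hpd, -⟩ := Nat.mem_primeFactors.mp hp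
      have h2 := hcon p hpp hpd
      by_contra hle
      push_neg at hle
      have hsm : (4 / (b - a)) < (p:ℝ) ^ (s p) := by
        have hne : {n : ℕ | 4 / (b - a) < (p : ℝ) ^ n}.Nonempty := by
          obtain ⟨n, hn⟩ := pow_unbounded_of_one_lt (y := (p:ℝ)) (4 / (b - a))
            (by exact_mod_cast hpp.one_lt)
          exact ⟨n, hn⟩
        have := Nat.sInf_mem hne
        rw [← hs p] at this
        exact this
      have hmono : (p:ℝ) ^ (s p) ≤ (p:ℝ) ^ (r.factorization p) :=
        pow_le_pow_right₀ (by exact_mod_cast hpp.one_lt.le) hle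
      have h4 : 4 < (b - a) * (p:ℝ) ^ (r.factorization p) := by
        have := (div_lt_iff₀ hε).mp (lt_of_lt_of_le hsm hmono)
        linarith
      linarith
    -- each prime factor lies in S
    have hsub : r.primeFactors ⊆ S := by
      intro p hp
      obtain ⟨hpp, hpd, -⟩ := Nat.mem_primeFactors.mp hp
      have he1 : 1 ≤ r.factorization p := Nat.Prime.factorization_pos_of_dvd hpp hr0 hpd
      have h2 := hcon p hpp hpd
      have hple : (p:ℝ) ≤ (p:ℝ) ^ (r.factorization p) := by
        calc (p:ℝ) = (p:ℝ) ^ 1 := (pow_one _).symm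
          _ ≤ _ := pow_le_pow_right₀ (by exact_mod_cast hpp.one_lt.le) he1
      have hpmax : (p:ℝ) ≤ max (3 / (b - a)) 2 := by
        refine le_trans ?_ (le_max_left _ _)
        rw [le_div_iff₀ hε]
        nlinarith [mul_le_mul_of_nonneg_right hple hε.le]
      rw [hS]
      refine Finset.mem_filter.mpr ⟨Finset.mem_range.mpr ?_, hpp⟩
      exact Nat.lt_succ_of_le (Nat.le_floor hpmax)
    -- conclude r ∣ P, contradiction
    have h1 : r = ∏ p ∈ r.primeFactors, p ^ r.factorization p := by
      conv_lhs => rw [← Nat.factorization_prod_pow_eq_self hr0]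
      rw [Nat.prod_factorization_eq_prod_primeFactors]
    have h2 : r = ∏ p ∈ S, p ^ r.factorization p := by
      conv_lhs => rw [h1]
      refine Finset.prod_subset hsub ?_
      intro p _ hpn
      have : r.factorization p = 0 := by
        have := Nat.support_factorization r
        exact Finsupp.notMem_support_iff.mp (by rwa [this])
      rw [this, pow_zero]
    have h3 : r ∣ P := by
      rw [h2, hP]
      refine Finset.prod_dvd_prod_of_dvd _ _ ?_
      intro p hp
      apply pow_dvd_pow
      by_cases hmem : p ∈ r.primeFactors
      · exact Nat.le_sub_one_of_lt (hexp p hmem)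
      · have : r.factorization p = 0 :=
          Finsupp.notMem_support_iff.mp (by rwa [Nat.support_factorization])
        omega
    exact absurd (Nat.le_of_dvd (by omega) h3) (by omega)
  obtain ⟨p, hpp, hpd, hkey⟩ := key
  set e := r.factorization p with he
  set d := p ^ e with hd
  set m := r / d with hmdef
  have hdm : d * m = r := Nat.ordProj_mul_ordCompl_eq_self r p
  have hm0 : 0 < m := Nat.ordCompl_pos p hr0
  have hm0' : (0:ℝ) < (m:ℝ) := by exact_mod_cast hm0
  have hcop : Nat.Coprime p m := Nat.coprime_ordCompl hpp hr0
  have hrcast : (r:ℝ) = (d:ℝ) * (m:ℝ) := by exact_mod_cast hdm.symm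
  -- interval length is more than 2m
  have h2m : (r:ℝ) * a + 2 * (m:ℝ) < (r:ℝ) * b := by
    have hd2 : (2:ℝ) < (b - a) * (d:ℝ) := by rw [hd]; push_cast; exact hkey
    nlinarith [mul_lt_mul_of_pos_right hd2 hm0']
  set k₀ : ℤ := ⌊((r:ℝ) * a - 1) / (m:ℝ)⌋ + 1 with hk₀
  set q₁ : ℤ := 1 + k₀ * (m:ℤ) with hq₁
  have hq₁lb : (r:ℝ) * a < (q₁:ℝ) := by
    have hfl : ((r:ℝ) * a - 1) / (m:ℝ) < (k₀:ℤ) := by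
      have := Int.lt_floor_add_one (((r:ℝ) * a - 1) / (m:ℝ))
      rw [hk₀]; push_cast; linarith
    have := (div_lt_iff₀ hm0').mp hfl
    rw [hq₁]; push_cast; linarith
  have hq₁ub : (q₁:ℝ) ≤ (r:ℝ) * a + (m:ℝ) := by
    have hfl : ((k₀:ℝ)) ≤ ((r:ℝ) * a - 1) / (m:ℝ) + 1 := by
      have := Int.floor_le (((r:ℝ) * a - 1) / (m:ℝ))
      rw [hk₀]; push_cast; linarith
    have h1 : ((k₀:ℝ)) * (m:ℝ) ≤ (((r:ℝ) * a - 1) / (m:ℝ) + 1) * (m:ℝ) :=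
      mul_le_mul_of_nonneg_right hfl hm0'.le
    rw [div_add_one (ne_of_gt hm0'), div_mul_cancel₀ _ (ne_of_gt hm0')] at h1
    rw [hq₁]; push_cast; linarith
  -- the two candidates q₁ and q₁ + m both lie in (ra, rb)
  have hq₂lb : (r:ℝ) * a < ((q₁ + (m:ℤ) :ℤ):ℝ) := by push_cast; push_cast at hq₁lb; linarith
  have hq₂ub : ((q₁ + (m:ℤ) :ℤ):ℝ) < (r:ℝ) * b := by push_cast; push_cast at hq₁ub; linarith
  have hq₁ub' : (q₁:ℝ) < (r:ℝ) * b := by linarith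
  -- coprimality helper
  have main : ∀ q : ℤ, ¬ (p:ℤ) ∣ q → (∃ t : ℤ, q = 1 + t * (m:ℤ)) →
      Int.gcd q (r:ℤ) = 1 := by
    intro q hnd ⟨t, ht⟩
    rw [← Int.isCoprime_iff_gcd_eq_one]
    have hreq : (r:ℤ) = (d:ℤ) * (m:ℤ) := by exact_mod_cast hdm.symm
    rw [hreq]
    refine IsCoprime.mul_right ?_ ?_
    · have hpz : Prime (p:ℤ) := by rw [Int.prime_iff_natAbs_prime]; simpa
      have hcp : IsCoprime q (p:ℤ) := ((hpz.coprime_iff_not_dvd).mpr hnd).symm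
      have : (d:ℤ) = (p:ℤ) ^ e := by rw [hd]; push_cast; ring
      rw [this]
      exact hcp.pow_right
    · have : IsCoprime (1 + (m:ℤ) * t) (m:ℤ) :=
        (isCoprime_one_left).add_mul_left_left t
      rwa [ht, mul_comm]
  -- choose the candidate not divisible by p
  have hpm : ¬ (p:ℤ) ∣ (m:ℤ) := by
    intro hdvd
    have : p ∣ m := Int.ofNat_dvd.mp hdvd
    exact (hpp.coprime_iff_not_dvd.mp hcop) this
  by_cases hc : (p:ℤ) ∣ q₁
  · refine ⟨q₁ + (m:ℤ), ?_, ?_, ?_⟩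
    · refine main _ ?_ ⟨k₀ + 1, by rw [hq₁]; ring⟩
      intro hdvd
      exact hpm (by simpa using dvd_sub hdvd hc)
    · rw [lt_div_iff₀ hrpos] at *
      calc a * (r:ℝ) = (r:ℝ) * a := by ring
        _ < _ := hq₂lb
    · rw [div_lt_iff₀ hrpos]
      calc ((q₁ + (m:ℤ) :ℤ):ℝ) < (r:ℝ) * b := hq₂ub
        _ = b * (r:ℝ) := by ring
  · refine ⟨q₁, main _ hc ⟨k₀, rfl⟩, ?_, ?_⟩
    · rw [lt_div_iff₀ hrpos]
      calc a * (r:ℝ) = (r:ℝ) * a := by ring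
        _ < _ := hq₁lb
    · rw [div_lt_iff₀ hrpos]
      calc (q₁:ℝ) < (r:ℝ) * b := hq₁ub'
        _ = b * (r:ℝ) := by ring
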